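/- Let N ≥ 4 be even, μ > 0, ω > 0, and let v, a, θ ∈ ℝ. Define, for each t ∈ ℝ, the N-tuple Ψ_t with components ψ_i(x,t) = e^{-i(v/2)x} e^{i(ω - v²/4)t} e^{iθ} φ_{ω, -(a+vt)}(x) for 1 ≤ i ≤ N/2 and ψ_i(x,t) = e^{+i(v/2)x} e^{i(ω - v²/4)t} e^{iθ} φ_{ω, a+vt}(x) for N/2 < i ≤ N. Then each component satisfies i ∂ψ/∂t = -∂²ψ/∂x² - |ψ|^{2μ} ψ on (0,∞) for all t, and for every t the tuple Ψ_t satisfies the Kirchhoff vertex condition (all components have the same value at x = 0 and the sum of the derivatives at x = 0 vanishes). Hence travelling waves exist on a Kirchhoff star graph with an even number of edges. -/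

import Mathlib

open Real MeasureTheory

/-- `sech y = 1 / cosh y`. -/
noncomputable def sech (y : ℝ) : ℝ := 1 / Real.cosh y

/-- The half-line soliton profile `φ_{ω,a}(x) = [(μ+1)ω]^{1/(2μ)} sech^{1/μ}(μ√ω (x-a))`. -/
noncomputable def solProfile (μ ω a : ℝ) (x : ℝ) : ℝ :=
  ((μ + 1) * ω) ^ (1 / (2 * μ)) * sech (μ * Real.sqrt ω * (x - a)) ^ (1 / μ)

/-- The sign `s_i`: `-1` on the first `N/2` edges and `+1` on the others. -/
noncomputable def halfSign (N : ℕ) (i : Fin N) : ℝ := if (i : ℕ) < N / 2 then -1 else 1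

/-- The travelling wave on an even Kirchhoff star graph:
`ψ_i(x,t) = e^{s_i i(v/2)x} e^{i(ω - v²/4)t} e^{iθ} φ_{ω, s_i(a+vt)}(x)` with `s_i = ∓1`
according as `i ≤ N/2` or `i > N/2`. -/
noncomputable def travellingWave (N : ℕ) (μ ω v a θ : ℝ) (i : Fin N) (x t : ℝ) : ℂ :=
  Complex.exp ((halfSign N i : ℂ) * Complex.I * (v / 2) * x) *
  Complex.exp (Complex.I * ((ω : ℂ) - (v : ℂ) ^ 2 / 4) * t) *
  Complex.exp (Complex.I * θ) *
  ((solProfile μ ω (halfSign N i * (a + v * t)) x : ℝ) : ℂ)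

/-! ### The real profile layer -/

/-- The centered profile written with a single `rpow` of `cosh`. -/
noncomputable def Gp (μ ω y : ℝ) : ℝ :=
  ((μ + 1) * ω) ^ (1 / (2 * μ)) * Real.cosh (μ * Real.sqrt ω * y) ^ (-(1 / μ))

/-- The derivative of `Gp`. -/
noncomputable def Gq (μ ω y : ℝ) : ℝ :=
  -Real.sqrt ω * (Real.sinh (μ * Real.sqrt ω * y) / Real.cosh (μ * Real.sqrt ω * y)) * Gp μ ω y

lemma solProfile_eq_Gp (μ ω c x : ℝ) : solProfile μ ω c x = Gp μ ω (x - c) := by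
  unfold solProfile Gp sech
  simp only [one_div]
  rw [Real.inv_rpow (Real.cosh_pos _).le, ← Real.rpow_neg (Real.cosh_pos _).le]

lemma Gp_pos {μ ω : ℝ} (hμ : 0 < μ) (hω : 0 < ω) (y : ℝ) : 0 < Gp μ ω y :=
  mul_pos (Real.rpow_pos_of_pos (by positivity) _)
    (Real.rpow_pos_of_pos (Real.cosh_pos _) _)

lemma Gp_even (μ ω y : ℝ) : Gp μ ω (-y) = Gp μ ω y := by
  unfold Gp; rw [mul_neg, Real.cosh_neg]

lemma Gq_odd (μ ω y : ℝ) : Gq μ ω (-y) = -Gq μ ω y := by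
  unfold Gq; rw [mul_neg, Real.cosh_neg, Real.sinh_neg, Gp_even]; ring

lemma hasDerivAt_Gp {μ ω : ℝ} (hμ : 0 < μ) (hω : 0 < ω) (y : ℝ) :
    HasDerivAt (Gp μ ω) (Gq μ ω y) y := by
  have hk : HasDerivAt (fun y : ℝ => μ * Real.sqrt ω * y) (μ * Real.sqrt ω) y := by
    simpa using (hasDerivAt_id y).const_mul (μ * Real.sqrt ω)
  have hcosh : HasDerivAt (fun y : ℝ => Real.cosh (μ * Real.sqrt ω * y))
      (Real.sinh (μ * Real.sqrt ω * y) * (μ * Real.sqrt ω)) y :=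
    (Real.hasDerivAt_cosh _).comp y hk
  have h := (hcosh.rpow_const (p := -(1/μ)) (Or.inl (Real.cosh_pos _).ne')).const_mul
      (((μ + 1) * ω) ^ (1 / (2 * μ)))
  refine h.congr_deriv (Eq.symm ?_)
  unfold Gq Gp
  rw [show -(1/μ) - 1 = -(1/μ) + (-1) from by ring, Real.rpow_add (Real.cosh_pos _),
    Real.rpow_neg_one]
  have h1 : Real.cosh (μ * Real.sqrt ω * y) ≠ 0 := (Real.cosh_pos _).ne'
  field_simp

lemma hasDerivAt_Gq {μ ω : ℝ} (hμ : 0 < μ) (hω : 0 < ω) (y : ℝ) :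
    HasDerivAt (Gq μ ω)
      (ω * Gp μ ω y - (μ + 1) * ω * (1 / Real.cosh (μ * Real.sqrt ω * y) ^ 2) * Gp μ ω y) y := by
  have hGq : Gq μ ω = fun y =>
      (((μ + 1) * ω) ^ (1 / (2 * μ)) * -Real.sqrt ω) *
        (Real.sinh (μ * Real.sqrt ω * y) * Real.cosh (μ * Real.sqrt ω * y) ^ (-(1/μ) - 1)) := by
    funext z
    unfold Gq Gp
    rw [show -(1/μ) - 1 = -(1/μ) + (-1) from by ring, Real.rpow_add (Real.cosh_pos _),
      Real.rpow_neg_one]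
    rw [div_eq_mul_inv]
    ring
  rw [hGq]
  have hk : HasDerivAt (fun y : ℝ => μ * Real.sqrt ω * y) (μ * Real.sqrt ω) y := by
    simpa using (hasDerivAt_id y).const_mul (μ * Real.sqrt ω)
  have hsinh : HasDerivAt (fun y : ℝ => Real.sinh (μ * Real.sqrt ω * y))
      (Real.cosh (μ * Real.sqrt ω * y) * (μ * Real.sqrt ω)) y := (Real.hasDerivAt_sinh _).comp y hk
  have hcosh : HasDerivAt (fun y : ℝ => Real.cosh (μ * Real.sqrt ω * y))
      (Real.sinh (μ * Real.sqrt ω * y) * (μ * Real.sqrt ω)) y := (Real.hasDerivAt_cosh _).comp y hk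
  have hp := hcosh.rpow_const (p := -(1/μ) - 1) (Or.inl (Real.cosh_pos _).ne')
  have h := (hsinh.mul hp).const_mul (((μ + 1) * ω) ^ (1 / (2 * μ)) * -Real.sqrt ω)
  refine h.congr_deriv (Eq.symm ?_)
  rw [show -(1/μ) - 1 - 1 = -(1/μ) + (-1) + (-1) from by ring,
    show -(1/μ) - 1 = -(1/μ) + (-1) from by ring,
    Real.rpow_add (Real.cosh_pos _), Real.rpow_add (Real.cosh_pos _),
    Real.rpow_add (Real.cosh_pos _), Real.rpow_neg_one]
  unfold Gp
  have h1 : Real.cosh (μ * Real.sqrt ω * y) ≠ 0 := (Real.cosh_pos _).ne'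
  have hs2 : Real.sinh (μ * Real.sqrt ω * y) ^ 2
      = Real.cosh (μ * Real.sqrt ω * y) ^ 2 - 1 := Real.sinh_sq _
  have hw : Real.sqrt ω * Real.sqrt ω = ω := Real.mul_self_sqrt hω.le
  set c := Real.cosh (μ * Real.sqrt ω * y) with hc
  set sh := Real.sinh (μ * Real.sqrt ω * y) with hsh
  set z := c ^ (-(1/μ)) with hz
  set C := ((μ + 1) * ω) ^ (1 / (2 * μ)) with hC
  field_simp
  linear_combination (-(C * z * Real.sqrt ω ^ 2 * (1 + μ))) * hs2
    + (-(C * z * (c ^ 2 - μ - 1))) * hw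

lemma Gp_rpow {μ ω : ℝ} (hμ : 0 < μ) (hω : 0 < ω) (y : ℝ) :
    Gp μ ω y ^ (2 * μ) = (μ + 1) * ω * (1 / Real.cosh (μ * Real.sqrt ω * y) ^ 2) := by
  unfold Gp
  have hC : (0:ℝ) ≤ (μ + 1) * ω := by positivity
  have e1 : 1 / (2 * μ) * (2 * μ) = 1 := by field_simp
  have e2 : -(1 / μ) * (2 * μ) = -2 := by field_simp
  rw [Real.mul_rpow (Real.rpow_nonneg hC _) (Real.rpow_nonneg (Real.cosh_pos _).le _),
    ← Real.rpow_mul hC, ← Real.rpow_mul (Real.cosh_pos _).le, e1, e2, Real.rpow_one]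
  rw [show (-2 : ℝ) = -((2:ℕ) : ℝ) from by norm_num, Real.rpow_neg (Real.cosh_pos _).le,
    Real.rpow_natCast, one_div]

/-! ### The complex layer -/

/-- The travelling wave on a single edge, with sign `s`. -/
noncomputable def wv (μ ω v a θ s : ℝ) (x t : ℝ) : ℂ :=
  Complex.exp ((s : ℂ) * Complex.I * (v / 2) * x) *
  Complex.exp (Complex.I * ((ω : ℂ) - (v : ℂ) ^ 2 / 4) * t) *
  Complex.exp (Complex.I * θ) *
  ((Gp μ ω (x - s * (a + v * t)) : ℝ) : ℂ)

/-- The spatial derivative of `wv`. -/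
noncomputable def wv' (μ ω v a θ s : ℝ) (x t : ℝ) : ℂ :=
  (s : ℂ) * Complex.I * (v / 2) * wv μ ω v a θ s x t +
  Complex.exp ((s : ℂ) * Complex.I * (v / 2) * x) *
  Complex.exp (Complex.I * ((ω : ℂ) - (v : ℂ) ^ 2 / 4) * t) *
  Complex.exp (Complex.I * θ) *
  ((Gq μ ω (x - s * (a + v * t)) : ℝ) : ℂ)

lemma travellingWave_eq_wv (N : ℕ) (μ ω v a θ : ℝ) (i : Fin N) (x t : ℝ) :
    travellingWave N μ ω v a θ i x t = wv μ ω v a θ (halfSign N i) x t := by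
  unfold travellingWave wv
  rw [solProfile_eq_Gp]

lemma halfSign_cases (N : ℕ) (i : Fin N) : halfSign N i = 1 ∨ halfSign N i = -1 := by
  unfold halfSign; split
  · exact Or.inr rfl
  · exact Or.inl rfl

lemma hasDerivAt_wv_x {μ ω : ℝ} (hμ : 0 < μ) (hω : 0 < ω) (v a θ s t x : ℝ) :
    HasDerivAt (fun y : ℝ => wv μ ω v a θ s y t) (wv' μ ω v a θ s x t) x := by
  have hE1 : HasDerivAt (fun y : ℝ => Complex.exp ((s : ℂ) * Complex.I * (v / 2) * y))
      (Complex.exp ((s : ℂ) * Complex.I * (v / 2) * x) * ((s : ℂ) * Complex.I * (v / 2))) x := by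
    have h0 : HasDerivAt (fun y : ℝ => (s : ℂ) * Complex.I * (v / 2) * (y : ℂ))
        ((s : ℂ) * Complex.I * (v / 2)) x := by
      simpa using (Complex.ofRealCLM.hasDerivAt (x := x)).const_mul
        ((s : ℂ) * Complex.I * ((v : ℂ) / 2))
    simpa using h0.cexp
  have hg : HasDerivAt (fun y : ℝ => ((Gp μ ω (y - s * (a + v * t)) : ℝ) : ℂ))
      ((Gq μ ω (x - s * (a + v * t)) : ℝ) : ℂ) x := by
    have h1 : HasDerivAt (fun y : ℝ => y - s * (a + v * t)) 1 x :=
      (hasDerivAt_id x).sub_const _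
    have h2 := (hasDerivAt_Gp hμ hω (x - s * (a + v * t))).comp x h1
    simpa using h2.ofReal_comp
  have H := ((hE1.mul_const
      (Complex.exp (Complex.I * ((ω : ℂ) - (v : ℂ) ^ 2 / 4) * t))).mul_const
      (Complex.exp (Complex.I * (θ : ℂ)))).mul hg
  refine H.congr_deriv (Eq.symm ?_)
  unfold wv' wv
  ring

lemma deriv_wv_x {μ ω : ℝ} (hμ : 0 < μ) (hω : 0 < ω) (v a θ s t : ℝ) :
    deriv (fun y : ℝ => wv μ ω v a θ s y t) = fun x => wv' μ ω v a θ s x t :=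
  funext fun x => (hasDerivAt_wv_x hμ hω v a θ s t x).deriv

lemma hasDerivAt_wv_t {μ ω : ℝ} (hμ : 0 < μ) (hω : 0 < ω) (v a θ s x t : ℝ) :
    HasDerivAt (fun τ : ℝ => wv μ ω v a θ s x τ)
      (Complex.I * ((ω : ℂ) - (v : ℂ) ^ 2 / 4) * wv μ ω v a θ s x t +
        Complex.exp ((s : ℂ) * Complex.I * (v / 2) * x) *
        Complex.exp (Complex.I * ((ω : ℂ) - (v : ℂ) ^ 2 / 4) * t) *
        Complex.exp (Complex.I * θ) *
        ((-(s * v) * Gq μ ω (x - s * (a + v * t)) : ℝ) : ℂ)) t := by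
  have hE2 : HasDerivAt (fun τ : ℝ => Complex.exp (Complex.I * ((ω : ℂ) - (v : ℂ) ^ 2 / 4) * τ))
      (Complex.exp (Complex.I * ((ω : ℂ) - (v : ℂ) ^ 2 / 4) * t) *
        (Complex.I * ((ω : ℂ) - (v : ℂ) ^ 2 / 4))) t := by
    have h0 : HasDerivAt (fun τ : ℝ => Complex.I * ((ω : ℂ) - (v : ℂ) ^ 2 / 4) * (τ : ℂ))
        (Complex.I * ((ω : ℂ) - (v : ℂ) ^ 2 / 4)) t := by
      simpa using (Complex.ofRealCLM.hasDerivAt (x := t)).const_mul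
        (Complex.I * ((ω : ℂ) - (v : ℂ) ^ 2 / 4))
    simpa using h0.cexp
  have hg : HasDerivAt (fun τ : ℝ => ((Gp μ ω (x - s * (a + v * τ)) : ℝ) : ℂ))
      ((Gq μ ω (x - s * (a + v * t)) * (-(s * v)) : ℝ) : ℂ) t := by
    have hin : HasDerivAt (fun τ : ℝ => x - s * (a + v * τ)) (-(s * v)) t := by
      have h1 : HasDerivAt (fun τ : ℝ => s * (a + v * τ)) (s * v) t := by
        simpa using (((hasDerivAt_id t).const_mul v).const_add a).const_mul s
      have := (hasDerivAt_const t x).sub h1; simp only [zero_sub] at this; exact this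
    have h2 := (hasDerivAt_Gp hμ hω (x - s * (a + v * t))).comp t hin
    simpa using h2.ofReal_comp
  have H := ((hE2.const_mul
      (Complex.exp ((s : ℂ) * Complex.I * (v / 2) * x))).mul_const
      (Complex.exp (Complex.I * (θ : ℂ)))).mul hg
  refine H.congr_deriv (Eq.symm ?_)
  unfold wv
  push_cast
  ring

lemma hasDerivAt_wv'_x {μ ω : ℝ} (hμ : 0 < μ) (hω : 0 < ω) (v a θ s t x : ℝ) :
    HasDerivAt (fun y : ℝ => wv' μ ω v a θ s y t)
      ((s : ℂ) * Complex.I * (v / 2) * wv' μ ω v a θ s x t +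
        ((s : ℂ) * Complex.I * (v / 2) *
          (Complex.exp ((s : ℂ) * Complex.I * (v / 2) * x) *
            Complex.exp (Complex.I * ((ω : ℂ) - (v : ℂ) ^ 2 / 4) * t) *
            Complex.exp (Complex.I * θ) *
            ((Gq μ ω (x - s * (a + v * t)) : ℝ) : ℂ)) +
          Complex.exp ((s : ℂ) * Complex.I * (v / 2) * x) *
          Complex.exp (Complex.I * ((ω : ℂ) - (v : ℂ) ^ 2 / 4) * t) *
          Complex.exp (Complex.I * θ) *
          ((ω * Gp μ ω (x - s * (a + v * t)) -
              (μ + 1) * ω * (1 / Real.cosh (μ * Real.sqrt ω * (x - s * (a + v * t))) ^ 2) *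
                Gp μ ω (x - s * (a + v * t)) : ℝ) : ℂ))) x := by
  have hE1 : HasDerivAt (fun y : ℝ => Complex.exp ((s : ℂ) * Complex.I * (v / 2) * y))
      (Complex.exp ((s : ℂ) * Complex.I * (v / 2) * x) * ((s : ℂ) * Complex.I * (v / 2))) x := by
    have h0 : HasDerivAt (fun y : ℝ => (s : ℂ) * Complex.I * (v / 2) * (y : ℂ))
        ((s : ℂ) * Complex.I * (v / 2)) x := by
      simpa using (Complex.ofRealCLM.hasDerivAt (x := x)).const_mul
        ((s : ℂ) * Complex.I * ((v : ℂ) / 2))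
    simpa using h0.cexp
  have hg : HasDerivAt (fun y : ℝ => ((Gq μ ω (y - s * (a + v * t)) : ℝ) : ℂ))
      ((ω * Gp μ ω (x - s * (a + v * t)) -
          (μ + 1) * ω * (1 / Real.cosh (μ * Real.sqrt ω * (x - s * (a + v * t))) ^ 2) *
            Gp μ ω (x - s * (a + v * t)) : ℝ) : ℂ) x := by
    have h1 : HasDerivAt (fun y : ℝ => y - s * (a + v * t)) 1 x :=
      (hasDerivAt_id x).sub_const _
    have h2 := (hasDerivAt_Gq hμ hω (x - s * (a + v * t))).comp x h1
    simpa using h2.ofReal_comp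
  have H1 := (hasDerivAt_wv_x hμ hω v a θ s t x).const_mul ((s : ℂ) * Complex.I * (v / 2))
  have H2 := ((hE1.mul_const
      (Complex.exp (Complex.I * ((ω : ℂ) - (v : ℂ) ^ 2 / 4) * t))).mul_const
      (Complex.exp (Complex.I * (θ : ℂ)))).mul hg
  have H := H1.add H2
  refine H.congr_deriv (Eq.symm ?_)
  unfold wv' wv
  push_cast
  ring

lemma abs_wv {μ ω : ℝ} (hμ : 0 < μ) (hω : 0 < ω) (v a θ s x t : ℝ) :
    ‖wv μ ω v a θ s x t‖ = Gp μ ω (x - s * (a + v * t)) := by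
  unfold wv
  rw [norm_mul, norm_mul, norm_mul, Complex.norm_exp, Complex.norm_exp, Complex.norm_exp,
    Complex.norm_real, Real.norm_eq_abs]
  have h1 : ((s : ℂ) * Complex.I * ((v : ℂ) / 2) * (x : ℂ)).re = 0 := by simp
  have h2 : (Complex.I * ((ω : ℂ) - (v : ℂ) ^ 2 / 4) * (t : ℂ)).re = 0 := by simp [← Complex.ofReal_pow]
  have h3 : (Complex.I * (θ : ℂ)).re = 0 := by simp
  rw [h1, h2, h3, Real.exp_zero, abs_of_pos (Gp_pos hμ hω _)]
  ring

lemma wv_pde (μ ω v a θ : ℝ) (hμ : 0 < μ) (hω : 0 < ω) (s : ℝ) (hs : s = 1 ∨ s = -1)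
    (x t : ℝ) :
    Complex.I * deriv (fun τ : ℝ => wv μ ω v a θ s x τ) t
      = - deriv (deriv (fun y : ℝ => wv μ ω v a θ s y t)) x
        - ((‖wv μ ω v a θ s x t‖ ^ (2 * μ) : ℝ) : ℂ) * wv μ ω v a θ s x t := by
  rw [(hasDerivAt_wv_t hμ hω v a θ s x t).deriv, deriv_wv_x hμ hω v a θ s t,
    (hasDerivAt_wv'_x hμ hω v a θ s t x).deriv, abs_wv hμ hω v a θ s x t, Gp_rpow hμ hω]
  unfold wv' wv
  push_cast
  rcases hs with rfl | rfl
  · push_cast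
    linear_combination (Complex.exp ((1:ℂ) * Complex.I * (v / 2) * x) *
      Complex.exp (Complex.I * ((ω : ℂ) - (v : ℂ) ^ 2 / 4) * t) *
      Complex.exp (Complex.I * θ) *
      ((Gp μ ω (x - 1 * (a + v * t)) : ℝ) : ℂ) * (ω : ℂ)) * Complex.I_mul_I
  · push_cast
    linear_combination (Complex.exp ((-1:ℂ) * Complex.I * (v / 2) * x) *
      Complex.exp (Complex.I * ((ω : ℂ) - (v : ℂ) ^ 2 / 4) * t) *
      Complex.exp (Complex.I * θ) *
      ((Gp μ ω (x - (-1) * (a + v * t)) : ℝ) : ℂ) * (ω : ℂ)) * Complex.I_mul_I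

lemma wv_zero (μ ω v a θ s : ℝ) (hs : s = 1 ∨ s = -1) (t : ℝ) :
    wv μ ω v a θ s 0 t
      = Complex.exp (Complex.I * ((ω : ℂ) - (v : ℂ) ^ 2 / 4) * t) *
        Complex.exp (Complex.I * θ) * ((Gp μ ω (a + v * t) : ℝ) : ℂ) := by
  unfold wv
  rcases hs with rfl | rfl
  · rw [show (0:ℝ) - 1 * (a + v * t) = -(a + v * t) from by ring, Gp_even]
    push_cast
    simp
  · rw [show (0:ℝ) - (-1) * (a + v * t) = (a + v * t) from by ring]
    push_cast
    simp

lemma wv'_zero (μ ω v a θ s : ℝ) (hs : s = 1 ∨ s = -1) (t : ℝ) :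
    wv' μ ω v a θ s 0 t
      = (s : ℂ) * (Complex.exp (Complex.I * ((ω : ℂ) - (v : ℂ) ^ 2 / 4) * t) *
          Complex.exp (Complex.I * θ) *
          (Complex.I * (v / 2) * ((Gp μ ω (a + v * t) : ℝ) : ℂ)
            - ((Gq μ ω (a + v * t) : ℝ) : ℂ))) := by
  unfold wv' wv
  rcases hs with rfl | rfl
  · rw [show (0:ℝ) - 1 * (a + v * t) = -(a + v * t) from by ring, Gp_even, Gq_odd]
    push_cast
    simp
    ring
  · rw [show (0:ℝ) - (-1) * (a + v * t) = (a + v * t) from by ring]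
    push_cast
    simp
    ring

lemma halfSign_sum (N : ℕ) (heven : Even N) : (∑ i : Fin N, (halfSign N i : ℂ)) = 0 := by
  have h0 : ∀ i : Fin N, (halfSign N i : ℂ) = if (i : ℕ) < N / 2 then (-1 : ℂ) else 1 := by
    intro i; unfold halfSign; split <;> simp
  rw [Finset.sum_congr rfl fun i _ => h0 i]
  rw [Fin.sum_univ_eq_sum_range (fun n => if n < N / 2 then (-1 : ℂ) else 1)]
  obtain ⟨m, hm⟩ := heven
  have h2 : N / 2 = m := by omega
  have h3 : N = m + m := hm
  rw [h2, h3, Finset.range_eq_Ico,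
    ← Finset.sum_Ico_consecutive _ (Nat.zero_le m) (by omega : m ≤ m + m)]
  have hA : (∑ n ∈ Finset.Ico 0 m, if n < m then (-1 : ℂ) else 1) = -(m : ℂ) := by
    rw [Finset.sum_congr rfl (fun n hn => if_pos (by simp at hn; omega))]
    simp
  have hB : (∑ n ∈ Finset.Ico m (m + m), if n < m then (-1 : ℂ) else 1) = (m : ℂ) := by
    rw [Finset.sum_congr rfl (fun n hn => if_neg (by simp at hn; omega))]
    simp
  rw [hA, hB]
  ring

/-- for even `N ≥ 4`, `μ > 0`, `ω > 0` and `v, a, θ ∈ ℝ`, each component of the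
travelling wave solves the focusing NLS on `(0,∞)` for all times, and at each time the tuple
satisfies the Kirchhoff vertex condition. Hence travelling waves exist on a Kirchhoff star graph
with an even number of edges. -/
theorem travelling_waves_on_even_kirchhoff (N : ℕ) (hN : 4 ≤ N) (heven : Even N)
    (μ ω v a θ : ℝ) (hμ : 0 < μ) (hω : 0 < ω) :
    (∀ i : Fin N, ∀ x : ℝ, 0 < x → ∀ t : ℝ,
      Complex.I * deriv (fun s : ℝ => travellingWave N μ ω v a θ i x s) t
        = - deriv (deriv (fun y : ℝ => travellingWave N μ ω v a θ i y t)) x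
          - ((‖travellingWave N μ ω v a θ i x t‖ ^ (2 * μ) : ℝ) : ℂ)
              * travellingWave N μ ω v a θ i x t) ∧
    (∀ t : ℝ,
      (∀ i k : Fin N, travellingWave N μ ω v a θ i 0 t = travellingWave N μ ω v a θ k 0 t) ∧
      (∑ i : Fin N, deriv (fun y : ℝ => travellingWave N μ ω v a θ i y t) 0) = 0) := by
  constructor
  · intro i x _ t
    simp only [travellingWave_eq_wv]
    exact wv_pde μ ω v a θ hμ hω _ (halfSign_cases N i) x t
  · intro t
    constructor
    · intro i k
      simp only [travellingWave_eq_wv]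
      rw [wv_zero μ ω v a θ _ (halfSign_cases N i) t, wv_zero μ ω v a θ _ (halfSign_cases N k) t]
    · have hder : ∀ i : Fin N, deriv (fun y : ℝ => travellingWave N μ ω v a θ i y t) 0
          = (halfSign N i : ℂ) *
            (Complex.exp (Complex.I * ((ω : ℂ) - (v : ℂ) ^ 2 / 4) * t) *
              Complex.exp (Complex.I * θ) *
              (Complex.I * (v / 2) * ((Gp μ ω (a + v * t) : ℝ) : ℂ)
                - ((Gq μ ω (a + v * t) : ℝ) : ℂ))) := by
        intro i
        simp only [travellingWave_eq_wv]
        rw [deriv_wv_x hμ hω v a θ _ t]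
        exact wv'_zero μ ω v a θ _ (halfSign_cases N i) t
      rw [Finset.sum_congr rfl fun i _ => hder i, ← Finset.sum_mul, halfSign_sum N heven,
        zero_mul]
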